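/- Let H be a real Hilbert space and T_l : H → H a bounded linear operator with ‖T_l‖ ≤ 1 which is self-adjoint and positive (⟨T_l x, x⟩ ≥ 0 for all x ∈ H). Let z ∈ H, let φ̄ satisfy φ̄ = T_l φ̄ + z, and let (φ_k) be defined by φ_{k+1} := T_l φ_k + z from any φ₁ ∈ H. Then for every j ≥ 1, ‖φ̄ − φ_j‖² − ‖φ̄ − φ_{j+1}‖² ≥ ‖z − (I − T_l) φ_j‖². -/

import Mathlib

/-- Cauchy–Schwarz for the positive semidefinite form `(u, v) ↦ ⟪T u, v⟫`. -/
lemma cs_pos_form {H : Type*} [NormedAddCommGroup H] [InnerProductSpace ℝ H]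
    (Tl : H →L[ℝ] H)
    (hsa : ∀ x y : H, inner ℝ (Tl x) y = (inner ℝ x (Tl y) : ℝ))
    (hpos : ∀ x : H, 0 ≤ (inner ℝ (Tl x) x : ℝ)) (u v : H) :
    (inner ℝ (Tl u) v : ℝ) ^ 2 ≤ (inner ℝ (Tl u) u : ℝ) * (inner ℝ (Tl v) v : ℝ) := by
  have key : ∀ t : ℝ, 0 ≤ (inner ℝ (Tl v) v : ℝ) * (t * t) +
      (2 * (inner ℝ (Tl u) v : ℝ)) * t + (inner ℝ (Tl u) u : ℝ) := by
    intro t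
    have h := hpos (u + t • v)
    have expand : (inner ℝ (Tl (u + t • v)) (u + t • v) : ℝ) =
        (inner ℝ (Tl v) v : ℝ) * (t * t) + (2 * (inner ℝ (Tl u) v : ℝ)) * t +
          (inner ℝ (Tl u) u : ℝ) := by
      simp only [map_add, map_smul, inner_add_add_self, inner_add_left,
        inner_add_right, real_inner_smul_left, real_inner_smul_right,
        ContinuousLinearMap.coe_smul', Pi.smul_apply]
      have h1 : (inner ℝ (Tl v) u : ℝ) = (inner ℝ (Tl u) v : ℝ) := by
        rw [hsa v u, real_inner_comm]
      rw [h1]; ring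
    rw [expand] at h
    linarith
  have hd := discrim_le_zero key
  rw [discrim] at hd
  nlinarith [hd]

theorem mazya_error_decay_ge_residual_sq
    {H : Type*} [NormedAddCommGroup H] [InnerProductSpace ℝ H] [CompleteSpace H]
    (Tl : H →L[ℝ] H) (hTl : ‖Tl‖ ≤ 1)
    (hsa : ∀ x y : H, inner ℝ (Tl x) y = (inner ℝ x (Tl y) : ℝ))
    (hpos : ∀ x : H, 0 ≤ (inner ℝ (Tl x) x : ℝ))
    (z : H) (φbar : H) (hfix : φbar = Tl φbar + z)
    (φ : ℕ → H) (hrec : ∀ k, 1 ≤ k → φ (k + 1) = Tl (φ k) + z) :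
    ∀ j, 1 ≤ j →
      ‖z - (φ j - Tl (φ j))‖ ^ 2 ≤ ‖φbar - φ j‖ ^ 2 - ‖φbar - φ (j + 1)‖ ^ 2 := by
  -- key inequality: ‖T x‖² ≤ ⟨T x, x⟩
  have key : ∀ x : H, ‖Tl x‖ ^ 2 ≤ (inner ℝ (Tl x) x : ℝ) := by
    intro x
    rcases eq_or_ne (‖Tl x‖) 0 with h0 | h0
    · rw [h0]; simpa using hpos x
    · have hcs := cs_pos_form Tl hsa hpos x (Tl x)
      have h1 : (inner ℝ (Tl x) (Tl x) : ℝ) = ‖Tl x‖ ^ 2 := real_inner_self_eq_norm_sq _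
      have h2 : (inner ℝ (Tl (Tl x)) (Tl x) : ℝ) ≤ ‖Tl x‖ ^ 2 := by
        calc (inner ℝ (Tl (Tl x)) (Tl x) : ℝ) ≤ ‖Tl (Tl x)‖ * ‖Tl x‖ :=
              real_inner_le_norm _ _
          _ ≤ (‖Tl‖ * ‖Tl x‖) * ‖Tl x‖ := by
              gcongr; exact Tl.le_opNorm _
          _ ≤ (1 * ‖Tl x‖) * ‖Tl x‖ := by gcongr
          _ = ‖Tl x‖ ^ 2 := by ring
      have hpos0 : 0 < ‖Tl x‖ := lt_of_le_of_ne (norm_nonneg _) (Ne.symm h0)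
      have h3 : (inner ℝ (Tl x) x : ℝ) * (inner ℝ (Tl (Tl x)) (Tl x) : ℝ) ≤
          (inner ℝ (Tl x) x : ℝ) * ‖Tl x‖ ^ 2 := mul_le_mul_of_nonneg_left h2 (hpos x)
      nlinarith [mul_pos hpos0 hpos0, sq_nonneg (‖Tl x‖)]
  intro j hj
  set e : H := φbar - φ j with he
  have h1 : φbar - φ (j + 1) = Tl e := by
    rw [hrec j hj, he]
    nth_rewrite 1 [hfix]
    rw [map_sub]; abel
  have h2 : z - (φ j - Tl (φ j)) = e - Tl e := by
    have hz : z = φbar - Tl φbar := by nth_rewrite 1 [hfix]; abel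
    rw [hz, he, map_sub]; abel
  rw [h1, h2]
  have hexp : ‖e - Tl e‖ ^ 2 = ‖e‖ ^ 2 - 2 * (inner ℝ e (Tl e) : ℝ) + ‖Tl e‖ ^ 2 := by
    rw [norm_sub_sq_real]
  have hc : (inner ℝ e (Tl e) : ℝ) = (inner ℝ (Tl e) e : ℝ) := real_inner_comm _ _
  nlinarith [key e]
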